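/- Let N ≥ 4 be an integer divisible by 4. Then ∑_{s=1}^{N/4} 1/sin²((2s−1)π/N) = N²/8. -/

import Mathlib

open Complex Finset

private lemma zeta_pow_m (m : ℕ) (hm : 0 < m) (k : ℕ) :
    Complex.exp (Real.pi * I * (2 * k + 1) / m) ^ m = -1 := by
  have hme : (m : ℂ) ≠ 0 := Nat.cast_ne_zero.mpr hm.ne'
  rw [← Complex.exp_nat_mul]
  have h1 : (m : ℂ) * (Real.pi * I * (2 * k + 1) / m)
      = ((2 * k + 1 : ℕ) : ℂ) * (Real.pi * I) := by
    field_simp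
    push_cast; ring
  rw [h1, Complex.exp_nat_mul, Complex.exp_pi_mul_I, Odd.neg_one_pow ⟨k, by ring⟩]

private lemma sum_zeta_pow_eq_zero (m : ℕ) (hm : 0 < m) (e : ℕ) (he : ¬ m ∣ e) :
    ∑ k ∈ range m, Complex.exp (Real.pi * I * (2 * k + 1) / m) ^ e = 0 := by
  have hme : (m : ℂ) ≠ 0 := Nat.cast_ne_zero.mpr hm.ne'
  have hterm : ∀ k : ℕ, Complex.exp (Real.pi * I * (2 * k + 1) / m) ^ e
      = Complex.exp (Real.pi * I * e / m) * Complex.exp (2 * Real.pi * I * e / m) ^ k := by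
    intro k
    rw [← Complex.exp_nat_mul, ← Complex.exp_nat_mul, ← Complex.exp_add]
    congr 1
    field_simp
    ring
  rw [Finset.sum_congr rfl fun k _ => hterm k, ← Finset.mul_sum]
  have hpi : (Real.pi : ℂ) ≠ 0 := by
    exact_mod_cast Real.pi_ne_zero
  have hw1 : Complex.exp (2 * Real.pi * I * e / m) ≠ 1 := by
    intro hone
    rw [Complex.exp_eq_one_iff] at hone
    obtain ⟨n, hn⟩ := hone
    apply he
    have h3 : (e : ℂ) = (n : ℂ) * m := by
      have h2 : (e : ℂ) * (2 * Real.pi * I) = ((n : ℂ) * m) * (2 * Real.pi * I) := by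
        field_simp at hn
        linear_combination (2 * Real.pi * I) * hn
      exact mul_right_cancel₀ (by simp [hpi, Complex.I_ne_zero]) h2
    have h4 : (e : ℤ) = n * m := by exact_mod_cast h3
    have h5 : (m : ℤ) ∣ (e : ℤ) := ⟨n, by rw [h4]; ring⟩
    exact_mod_cast h5
  have hwm : Complex.exp (2 * Real.pi * I * e / m) ^ m = 1 := by
    rw [← Complex.exp_nat_mul]
    have h6 : (m : ℂ) * (2 * Real.pi * I * e / m) = (e : ℕ) * (2 * Real.pi * I) := by
      field_simp
    rw [h6, Complex.exp_nat_mul_two_pi_mul_I]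
  rw [geom_sum_eq hw1, hwm]
  simp

private lemma csc_sq_eq (m : ℕ) (hm : 0 < m) (k : ℕ) :
    1 / Complex.sin ((2 * (k : ℂ) + 1) * Real.pi / (2 * m)) ^ 2
      = -(Complex.exp (Real.pi * I * (2 * k + 1) / m)
          * (∑ j ∈ range m, Complex.exp (Real.pi * I * (2 * k + 1) / m) ^ j) ^ 2) := by
  have hme : (m : ℂ) ≠ 0 := Nat.cast_ne_zero.mpr hm.ne'
  set θ : ℂ := (2 * (k : ℂ) + 1) * Real.pi / (2 * m) with hθ
  set E : ℂ := Complex.exp (θ * I) with hEdef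
  have hE0 : E ≠ 0 := Complex.exp_ne_zero _
  have hζ : Complex.exp (Real.pi * I * (2 * k + 1) / m) = E ^ 2 := by
    rw [hEdef, ← Complex.exp_nat_mul]
    congr 1
    rw [hθ]
    push_cast
    field_simp
  have hsin : Complex.sin θ = (E⁻¹ - E) * I / 2 := by
    rw [Complex.sin, neg_mul, Complex.exp_neg, hEdef]
  rw [hζ, hsin]
  set g : ℂ := ∑ j ∈ range m, (E ^ 2) ^ j with hgdef
  have hpow : (E ^ 2) ^ m = -1 := by rw [← hζ]; exact zeta_pow_m m hm k
  have hgeom : (1 - E ^ 2) * g = 2 := by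
    have h := geom_sum_mul (E ^ 2) m
    rw [hpow] at h
    linear_combination -h
  have h2 : (E⁻¹ - E) * E = 1 - E ^ 2 := by
    field_simp
  symm
  apply eq_one_div_of_mul_eq_one_left
  calc (-(E ^ 2 * g ^ 2)) * ((E⁻¹ - E) * I / 2) ^ 2
      = -(I ^ 2) * (((E⁻¹ - E) * E) ^ 2 * g ^ 2) / 4 := by ring
    _ = ((1 - E ^ 2) * g) ^ 2 / 4 := by rw [h2, Complex.I_sq]; ring
    _ = 1 := by rw [hgeom]; norm_num

private lemma key_sum (m : ℕ) (hm : 0 < m) :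
    ∑ k ∈ range m, 1 / Complex.sin ((2 * (k : ℂ) + 1) * Real.pi / (2 * m)) ^ 2
      = (m : ℂ) ^ 2 := by
  have hsum : ∀ k ∈ range m,
      1 / Complex.sin ((2 * (k : ℂ) + 1) * Real.pi / (2 * m)) ^ 2
        = -(∑ j ∈ range m, ∑ l ∈ range m,
            Complex.exp (Real.pi * I * (2 * k + 1) / m) ^ (j + l + 1)) := by
    intro k _
    rw [csc_sq_eq m hm k]
    congr 1
    rw [sq, Finset.sum_mul_sum, Finset.mul_sum]
    refine Finset.sum_congr rfl fun j _ => ?_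
    rw [Finset.mul_sum]
    refine Finset.sum_congr rfl fun l _ => ?_
    rw [pow_add, pow_add, pow_one]
    ring
  rw [Finset.sum_congr rfl hsum, Finset.sum_neg_distrib, Finset.sum_comm]
  have hinner : ∀ j ∈ range m, ∑ k ∈ range m, ∑ l ∈ range m,
      Complex.exp (Real.pi * I * (2 * k + 1) / m) ^ (j + l + 1) = -(m : ℂ) := by
    intro j hj
    have hj' : j < m := mem_range.mp hj
    rw [Finset.sum_comm]
    have hl : ∀ l ∈ range m,
        ∑ k ∈ range m, Complex.exp (Real.pi * I * (2 * k + 1) / m) ^ (j + l + 1)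
          = if l = m - 1 - j then -(m : ℂ) else 0 := by
      intro l hlm
      have hl' : l < m := mem_range.mp hlm
      by_cases h : j + l + 1 = m
      · rw [if_pos (by omega)]
        rw [Finset.sum_congr rfl fun k _ => by rw [h, zeta_pow_m m hm k]]
        simp
      · rw [if_neg (by omega)]
        apply sum_zeta_pow_eq_zero m hm
        rintro ⟨c, hc⟩
        have hc0 : c ≠ 0 := by rintro rfl; omega
        have hc1 : c ≠ 1 := by rintro rfl; omega
        have h2c : 2 ≤ c := by omega
        have : m * 2 ≤ m * c := Nat.mul_le_mul_left m h2c
        omega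
    rw [Finset.sum_congr rfl hl, Finset.sum_ite_eq' (range m) (m - 1 - j)]
    rw [if_pos (mem_range.mpr (by omega))]
  rw [Finset.sum_congr rfl hinner]
  simp [Finset.sum_const, Finset.card_range]
  ring

theorem sum_inv_sin_sq_odd (N : ℕ) (hN4 : 4 ∣ N) (hN : 4 ≤ N) :
    ∑ s ∈ Finset.Icc 1 (N / 4),
        1 / Real.sin ((2 * (s : ℝ) - 1) * Real.pi / N) ^ 2
      = (N : ℝ) ^ 2 / 8 := by
  obtain ⟨n, rfl⟩ := hN4
  have hn : 1 ≤ n := by omega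
  have hdiv : 4 * n / 4 = n := by omega
  rw [hdiv]
  set F : ℕ → ℝ := fun k => 1 / Real.sin ((2 * (k : ℝ) + 1) * Real.pi / (4 * n)) ^ 2 with hF
  have h1 : ∑ s ∈ Finset.Icc 1 n,
      1 / Real.sin ((2 * (s : ℝ) - 1) * Real.pi / ((4 * n : ℕ) : ℝ)) ^ 2
      = ∑ k ∈ range n, F k := by
    rw [← Finset.Ico_add_one_right_eq_Icc, Finset.sum_Ico_eq_sum_range]
    refine Finset.sum_congr rfl fun k _ => ?_
    have harg : (2 * ((1 + k : ℕ) : ℝ) - 1) * Real.pi / ((4 * n : ℕ) : ℝ)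
        = (2 * (k : ℝ) + 1) * Real.pi / (4 * n) := by
      push_cast
      ring
    rw [harg]
  have h2 : ∑ k ∈ range (2 * n), F k = 2 * ∑ k ∈ range n, F k := by
    have hsplit : ∑ k ∈ range (n + n), F k
        = (∑ k ∈ range n, F k) + ∑ k ∈ range n, F (n + k) := Finset.sum_range_add F n n
    have hrefl : ∑ k ∈ range n, F (n + k) = ∑ k ∈ range n, F k := by
      rw [← Finset.sum_range_reflect (fun k => F (n + k)) n]
      refine Finset.sum_congr rfl fun k hk => ?_
      have hk' : k < n := mem_range.mp hk
      have harg : n + (n - 1 - k) = 2 * n - 1 - k := by omega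
      rw [harg]
      simp only [hF]
      have hcast : ((2 * n - 1 - k : ℕ) : ℝ) = 2 * (n : ℝ) - 1 - k := by
        have hh : (2 * n - 1 - k : ℕ) + k + 1 = 2 * n := by omega
        have := congrArg (Nat.cast : ℕ → ℝ) hh
        push_cast at this
        linarith
      have hang : (2 * ((2 * n - 1 - k : ℕ) : ℝ) + 1) * Real.pi / (4 * n)
          = Real.pi - (2 * (k : ℝ) + 1) * Real.pi / (4 * n) := by
        rw [hcast]
        have hn0 : (n : ℝ) ≠ 0 := Nat.cast_ne_zero.mpr (by omega)
        field_simp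
        ring
      rw [hang, Real.sin_pi_sub]
    rw [show 2 * n = n + n by ring, hsplit, hrefl]
    ring
  have h3 : ∑ k ∈ range (2 * n), F k = (2 * (n : ℝ)) ^ 2 := by
    have hkey := key_sum (2 * n) (by omega)
    have hden : 2 * ((2 * n : ℕ) : ℂ) = 4 * (n : ℂ) := by push_cast; ring
    rw [hden] at hkey
    apply Complex.ofReal_injective
    push_cast [hF, Complex.ofReal_sin]
    push_cast at hkey
    exact hkey
  rw [h1]
  have := h2.symm.trans h3
  push_cast
  nlinarith [this]
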